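/- Let T be a finite tree with vertex set V and edge set E (so #E = #V − 1), and for each edge e ∈ E let V_e^+ and V_e^- denote the vertex sets of the two connected components of T with e removed (a labelling fixed once for each edge). Then the linear map ℝ^V → ℝ^E × ℝ sending φ to ((Σ_{v∈V_e^+} φ(v) − Σ_{v∈V_e^-} φ(v))_{e∈E}, Σ_{v∈V} φ(v)) is a linear isomorphism. In particular, for any prescribed values (a_e)_{e∈E} ∈ ℝ^E and s ∈ ℝ there is a unique φ: V → ℝ with Σ_{v∈V_e^+} φ(v) − Σ_{v∈V_e^-} φ(v) = a_e for every e ∈ E and Σ_{v∈V} φ(v) = s. -/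

import Mathlib

namespace ThetaPaper

/-- The adjacency relation within a vertex set `S`: `a` and `b` lie in `S`
and are joined by an edge of the multigraph with edge-endpoint map `ends`. -/
def AdjOn {V E : Type} (ends : E → Sym2 V) (S : Set V) (a b : V) : Prop :=
  a ∈ S ∧ b ∈ S ∧ ∃ e, ends e = s(a, b)

/-- The induced subgraph on `S` is (nonempty and) connected. -/
def ConnectedOn {V E : Type} (ends : E → Sym2 V) (S : Set V) : Prop :=
  S.Nonempty ∧ ∀ a ∈ S, ∀ b ∈ S, Relation.ReflTransGen (AdjOn ends S) a b

/-- The multigraph is connected. -/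
def GraphConnected {V E : Type} (ends : E → Sym2 V) : Prop :=
  ConnectedOn ends Set.univ

/-- A nonempty proper subset `S` of the vertices is elementary if both the induced
subgraph on `S` and the induced subgraph on its complement are connected. -/
def Elementary {V E : Type} (ends : E → Sym2 V) (S : Set V) : Prop :=
  S.Nonempty ∧ Sᶜ.Nonempty ∧ ConnectedOn ends S ∧ ConnectedOn ends Sᶜ

/-- `cut S` is the number of edges with one endpoint in `S` and the other outside. -/
noncomputable def cut {V E : Type} (ends : E → Sym2 V) (S : Set V) : ℕ :=
  Nat.card {e : E // ∃ a b, ends e = s(a, b) ∧ a ∈ S ∧ b ∉ S}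

/-- `ℓ(S,d)(φ) = d − Σ_{v∈S} φ(v) + cut(S)/2`. -/
noncomputable def ell {V E : Type} (ends : E → Sym2 V) (S : Set V) (d : ℤ) (φ : V → ℝ) : ℝ :=
  (d : ℝ) - (∑ᶠ v ∈ S, φ v) + (cut ends S : ℝ) / 2

/-- `φ` is nondegenerate: it lies on no stability hyperplane. -/
def Nondegenerate {V E : Type} (ends : E → Sym2 V) (φ : V → ℝ) : Prop :=
  ∀ S : Set V, Elementary ends S → ∀ d : ℤ, ell ends S d φ ≠ 0

/-- The multigraph has loop-free circuit rank 0: after deleting all loops it is a tree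
(connected, with number of edges = number of vertices − 1). -/
def RankZero {V E : Type} [Fintype V] (ends : E → Sym2 V) : Prop :=
  GraphConnected (fun e : {e : E // ¬ (ends e).IsDiag} => ends e.1) ∧
  Nat.card {e : E // ¬ (ends e).IsDiag} + 1 = Fintype.card V

/-- A sheaf model of degree `g−1`: a multidegree `dd` on the vertices together with a
set `N` of nodes (where the corresponding sheaf fails to be locally free), with
`Σ dd + #N = g − 1`. -/
def IsSheafModel {V E : Type} [Fintype V] (dd : V → ℤ) (N : Set E) (g : ℤ) : Prop :=
  (∑ v, dd v) + (Nat.card N : ℤ) = g - 1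

/-- The degree of the sheaf model `(dd, N)` on the subcurve with vertex set `S`:
`Σ_{v∈S} dd v` plus the number of edges of `N` with both endpoints in `S`. -/
noncomputable def degS {V E : Type} (ends : E → Sym2 V) (dd : V → ℤ) (N : Set E)
    (S : Set V) : ℤ :=
  (∑ᶠ v ∈ S, dd v) + (Nat.card {e : E // e ∈ N ∧ ∀ v ∈ ends e, v ∈ S} : ℤ)

/-- `φ`-semistability of a sheaf model. -/
def Semistable {V E : Type} (ends : E → Sym2 V) (dd : V → ℤ) (N : Set E)
    (φ : V → ℝ) : Prop :=
  ∀ S : Set V, S.Nonempty → S ≠ Set.univ →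
    (∑ᶠ v ∈ S, φ v) - (cut ends S : ℝ) / 2 ≤ (degS ends dd N S : ℝ)

/-- `φ`-stability of a sheaf model. -/
def Stable {V E : Type} (ends : E → Sym2 V) (dd : V → ℤ) (N : Set E)
    (φ : V → ℝ) : Prop :=
  ∀ S : Set V, S.Nonempty → S ≠ Set.univ →
    (∑ᶠ v ∈ S, φ v) - (cut ends S : ℝ) / 2 < (degS ends dd N S : ℝ)

/-- The set of nondegenerate elements of the affine space `V(Γ)` (with the real
number `gr` playing the role of `g`). -/
def OmegaSet {V E : Type} [Fintype V] (ends : E → Sym2 V) (gr : ℝ) : Set (V → ℝ) :=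
  {φ | (∑ v, φ v) = gr - 1 ∧ Nondegenerate ends φ}

/-- `P` is a stability polytope of `V(Γ)`: a connected component of the complement in
`V(Γ)` of the union of all stability hyperplanes. -/
def IsStabPolytope {V E : Type} [Fintype V] (ends : E → Sym2 V) (gr : ℝ)
    (P : Set (V → ℝ)) : Prop :=
  ∃ φ0 ∈ OmegaSet ends gr, P = connectedComponentIn (OmegaSet ends gr) φ0

open Classical

set_option linter.unusedSectionVars false

section Aux

variable {V E : Type}

/-- chains of given length, tracking the first step. -/
def Chain' (ends : E → Sym2 V) : ℕ → V → V → Prop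
  | 0, v, w => v = w
  | n+1, v, w => ∃ u e, ends e = s(v, u) ∧ Chain' ends n u w

theorem Chain'.append {ends : E → Sym2 V} {n : ℕ} {v c b : V}
    (h : Chain' ends n v c) (e : E) (he : ends e = s(c, b)) :
    Chain' ends (n+1) v b := by
  induction n generalizing v with
  | zero => cases h; exact ⟨b, e, he, rfl⟩
  | succ k ih =>
    obtain ⟨u, f, hf, hc⟩ := h
    exact ⟨u, f, hf, ih hc⟩

theorem Chain'.last {ends : E → Sym2 V} {k : ℕ} {r v : V}
    (h : Chain' ends (k+1) r v) : ∃ u e, ends e = s(u, v) ∧ Chain' ends k r u := by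
  induction k generalizing r with
  | zero =>
    obtain ⟨u, e, he, hu⟩ := h
    cases hu
    exact ⟨r, e, he, rfl⟩
  | succ m ih =>
    obtain ⟨u, e, he, hc⟩ := h
    obtain ⟨u', e', he', hc'⟩ := ih hc
    exact ⟨u', e', he', ⟨u, e, he, hc'⟩⟩

theorem exists_chain_of_reflTransGen {ends : E → Sym2 V} {S : Set V} {v w : V}
    (h : Relation.ReflTransGen (AdjOn ends S) v w) :
    ∃ n, Chain' ends n v w := by
  induction h with
  | refl => exact ⟨0, rfl⟩
  | tail _ hadj ih =>
    obtain ⟨n, hn⟩ := ih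
    obtain ⟨_, _, e, he⟩ := hadj
    exact ⟨n+1, hn.append e he⟩

/-- a connected multigraph on `V` has at least `card V - 1` edges. -/
theorem card_le_of_connected [Fintype V] [Fintype E] (ends : E → Sym2 V)
    (h : ∀ a b : V, Relation.ReflTransGen (AdjOn ends Set.univ) a b) :
    Fintype.card V ≤ Fintype.card E + 1 := by
  rcases isEmpty_or_nonempty V with hV | hV
  · simp [Fintype.card_eq_zero]
  obtain ⟨r⟩ := hV
  have hreach : ∀ v : V, ∃ n, Chain' ends n r v := fun v => exists_chain_of_reflTransGen (h r v)
  set d : V → ℕ := fun v => Nat.find (hreach v) with hd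
  have key : ∀ v : V, v ≠ r → ∃ e u, ends e = s(u, v) ∧ d u < d v := by
    intro v hv
    have hch : Chain' ends (d v) r v := Nat.find_spec (hreach v)
    have hdv : d v ≠ 0 := by
      intro h0
      rw [h0] at hch
      exact hv hch.symm
    obtain ⟨k, hk⟩ := Nat.exists_eq_succ_of_ne_zero hdv
    rw [hk] at hch
    obtain ⟨u, e, he, hc⟩ := hch.last
    refine ⟨e, u, he, ?_⟩
    calc d u ≤ k := Nat.find_le hc
    _ < d v := by omega
  have hinj : Fintype.card {v : V // v ≠ r} ≤ Fintype.card E := by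
    have : Function.Injective
        (fun v : {v : V // v ≠ r} => Classical.choose (key v.1 v.2)) := by
      intro v₁ v₂ heq
      obtain ⟨u₁, hu₁, hd₁⟩ := Classical.choose_spec (key v₁.1 v₁.2)
      obtain ⟨u₂, hu₂, hd₂⟩ := Classical.choose_spec (key v₂.1 v₂.2)
      simp only at heq
      rw [heq, hu₂] at hu₁
      rw [Sym2.eq_iff] at hu₁
      by_contra hne
      have hvv : v₁.1 ≠ v₂.1 := fun hh => hne (Subtype.ext hh)
      rcases hu₁ with ⟨h1, h2⟩ | ⟨h1, h2⟩
      · exact hvv h2.symm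
      · subst h1; subst h2; omega
    exact Fintype.card_le_of_injective _ this
  have hcs : Fintype.card {v : V // v ≠ r} = Fintype.card V - 1 := by
    simp [Fintype.card_subtype_compl (· = r)]
  have : 0 < Fintype.card V := Fintype.card_pos_iff.mpr ⟨r⟩
  omega

/-- a chain from inside `S` to outside `S` crosses the boundary of `S`. -/
theorem chain_cross {ends : E → Sym2 V} {S : Set V} {n : ℕ} {a w : V}
    (h : Chain' ends n a w) (ha : a ∈ S) (hw : w ∉ S) :
    ∃ x y g j m, Chain' ends j a x ∧ ends g = s(x, y) ∧ x ∈ S ∧ y ∉ S ∧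
      Chain' ends m y w ∧ j + m + 1 = n := by
  induction n generalizing a with
  | zero => cases h; exact absurd ha hw
  | succ k ih =>
    obtain ⟨u, e, he, hc⟩ := h
    by_cases hu : u ∈ S
    · obtain ⟨x, y, g, j, m, h1, h2, h3, h4, h5, h6⟩ := ih hc hu
      exact ⟨x, y, g, j+1, m, ⟨u, e, he, h1⟩, h2, h3, h4, h5, by omega⟩
    · exact ⟨a, u, e, 0, k, rfl, he, ha, hu, hc, by omega⟩

end Aux

section Tree

variable {V E : Type} [Fintype V] [Fintype E] {ends : E → Sym2 V} {Vp Vm : E → Set V}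

/-- the side of edge `e` containing `v`. -/
noncomputable def side (Vp Vm : E → Set V) (v : V) (e : E) : Set V :=
  if v ∈ Vp e then Vp e else Vm e

theorem mem_side (hunion : ∀ e, Vp e ∪ Vm e = Set.univ) (v : V) (e : E) :
    v ∈ side Vp Vm v e := by
  rw [side]
  split
  · assumption
  · have : v ∈ Vp e ∪ Vm e := (hunion e).symm ▸ Set.mem_univ v
    rcases this with h | h
    · contradiction
    · exact h

theorem not_mem_side_iff (hdisj : ∀ e, Vp e ∩ Vm e = ∅)
    (hunion : ∀ e, Vp e ∪ Vm e = Set.univ) (v w : V) (e : E) :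
    w ∉ side Vp Vm v e ↔ (if v ∈ Vp e then w ∈ Vm e else w ∈ Vp e) := by
  classical
  have hw : w ∈ Vp e ∪ Vm e := (hunion e).symm ▸ Set.mem_univ w
  have hnot : ¬ (w ∈ Vp e ∧ w ∈ Vm e) := by
    intro ⟨h1, h2⟩
    have : w ∈ Vp e ∩ Vm e := ⟨h1, h2⟩
    rw [hdisj e] at this
    exact this
  rw [side]
  split <;> rename_i hv
  · constructor
    · intro h; rcases hw with h' | h'; · contradiction
      · exact h'
    · intro h h'; exact hnot ⟨h', h⟩
  · constructor
    · intro h; rcases hw with h' | h'; · exact h'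
      · contradiction
    · intro h h'; exact hnot ⟨h, h'⟩


theorem reflTransGen_mono_univ {S : Set V} {a b : V} {ends' : E → Sym2 V}
    (h : Relation.ReflTransGen (AdjOn ends' S) a b) :
    Relation.ReflTransGen (AdjOn ends' Set.univ) a b :=
  Relation.ReflTransGen.mono (show AdjOn ends' S ≤ AdjOn ends' Set.univ from
    fun _ _ hab => ⟨trivial, trivial, hab.2.2⟩) _ _ h

/-- any edge crossing the cut of `e` is `e` itself. -/
theorem cross_eq (ends : E → Sym2 V)
    (hcard : Fintype.card E + 1 = Fintype.card V) (Vp Vm : E → Set V)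
    (hVp : ∀ e, ConnectedOn (fun e' : {e' : E // e' ≠ e} => ends e'.1) (Vp e))
    (hVm : ∀ e, ConnectedOn (fun e' : {e' : E // e' ≠ e} => ends e'.1) (Vm e))
    (hunion : ∀ e, Vp e ∪ Vm e = Set.univ)
    (e f : E) (x y : V) (hf : ends f = s(x, y)) (hx : x ∈ Vp e) (hy : y ∈ Vm e) :
    f = e := by
  by_contra hne
  set ends' : {e' : E // e' ≠ e} → Sym2 V := fun e' => ends e'.1 with hends'
  have hadjxy : AdjOn ends' Set.univ x y := ⟨trivial, trivial, ⟨⟨f, hne⟩, hf⟩⟩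
  have hinVp : ∀ a ∈ Vp e, ∀ b ∈ Vp e, Relation.ReflTransGen (AdjOn ends' Set.univ) a b :=
    fun a ha b hb => reflTransGen_mono_univ ((hVp e).2 a ha b hb)
  have hinVm : ∀ a ∈ Vm e, ∀ b ∈ Vm e, Relation.ReflTransGen (AdjOn ends' Set.univ) a b :=
    fun a ha b hb => reflTransGen_mono_univ ((hVm e).2 a ha b hb)
  have hconn' : ∀ a b : V, Relation.ReflTransGen (AdjOn ends' Set.univ) a b := by
    intro a b
    have ha : a ∈ Vp e ∪ Vm e := (hunion e).symm ▸ Set.mem_univ a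
    have hb : b ∈ Vp e ∪ Vm e := (hunion e).symm ▸ Set.mem_univ b
    have hyx : AdjOn ends' Set.univ y x :=
      ⟨trivial, trivial, ⟨⟨f, hne⟩, by show ends f = s(y, x); rw [hf]; exact Sym2.eq_swap⟩⟩
    rcases ha with ha | ha <;> rcases hb with hb | hb
    · exact hinVp a ha b hb
    · exact ((hinVp a ha x hx).tail hadjxy).trans (hinVm y hy b hb)
    · exact ((hinVm a ha y hy).tail hyx).trans (hinVp x hx b hb)
    · exact hinVm a ha b hb
  have hle := card_le_of_connected ends' hconn'
  have hE : 0 < Fintype.card E := Fintype.card_pos_iff.mpr ⟨e⟩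
  have hcs : Fintype.card {e' : E // e' ≠ e} = Fintype.card E - 1 := by
    simp [Fintype.card_subtype_compl (· = e)]
  omega

/-- a walk from outside `S` into `S` uses an edge crossing the boundary. -/
theorem exists_cross {ends : E → Sym2 V} {S : Set V} {a b : V}
    (h : Relation.ReflTransGen (AdjOn ends Set.univ) a b) (ha : a ∉ S) (hb : b ∈ S) :
    ∃ x y g, ends g = s(x, y) ∧ x ∉ S ∧ y ∈ S := by
  induction h with
  | refl => exact absurd hb ha
  | @tail c d hst hadj ih =>
    by_cases hc : c ∈ S
    · exact ih hc
    · exact ⟨c, d, hadj.2.2.choose, hadj.2.2.choose_spec, hc, hb⟩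

/-- symmetric version of `cross_eq`. -/
theorem cross_eq' (ends : E → Sym2 V)
    (hcard : Fintype.card E + 1 = Fintype.card V) (Vp Vm : E → Set V)
    (hVp : ∀ e, ConnectedOn (fun e' : {e' : E // e' ≠ e} => ends e'.1) (Vp e))
    (hVm : ∀ e, ConnectedOn (fun e' : {e' : E // e' ≠ e} => ends e'.1) (Vm e))
    (hunion : ∀ e, Vp e ∪ Vm e = Set.univ)
    (e f : E) (x y : V) (hf : ends f = s(x, y))
    (h : (x ∈ Vp e ∧ y ∈ Vm e) ∨ (x ∈ Vm e ∧ y ∈ Vp e)) :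
    f = e := by
  rcases h with ⟨h1, h2⟩ | ⟨h1, h2⟩
  · exact cross_eq ends hcard Vp Vm hVp hVm hunion e f x y hf h1 h2
  · exact cross_eq ends hcard Vp Vm hVp hVm hunion e f y x
      (by rw [hf, Sym2.eq_swap]) h2 h1

/-- the two endpoints of an edge lie on opposite sides. -/
theorem endpoints_opposite (ends : E → Sym2 V)
    (hconn : GraphConnected ends)
    (hcard : Fintype.card E + 1 = Fintype.card V) (Vp Vm : E → Set V)
    (hdisj : ∀ e, Vp e ∩ Vm e = ∅)
    (hunion : ∀ e, Vp e ∪ Vm e = Set.univ)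
    (hVp : ∀ e, ConnectedOn (fun e' : {e' : E // e' ≠ e} => ends e'.1) (Vp e))
    (hVm : ∀ e, ConnectedOn (fun e' : {e' : E // e' ≠ e} => ends e'.1) (Vm e))
    (e : E) (x y : V) (he : ends e = s(x, y)) :
    (x ∈ Vp e ∧ y ∈ Vm e) ∨ (x ∈ Vm e ∧ y ∈ Vp e) := by
  have hnot : ∀ w : V, w ∈ Vp e → w ∈ Vm e → False := by
    intro w h1 h2
    have : w ∈ Vp e ∩ Vm e := ⟨h1, h2⟩
    rw [hdisj e] at this
    exact this
  have hmem : ∀ w : V, w ∈ Vp e ∪ Vm e := fun w => (hunion e).symm ▸ Set.mem_univ w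
  have hnotpp : ¬ (x ∈ Vp e ∧ y ∈ Vp e) := by
    rintro ⟨hx, hy⟩
    obtain ⟨m, hm⟩ := (hVm e).1
    have hmnp : m ∉ Vp e := fun h => hnot m h hm
    obtain ⟨p, q, g, hg, hp, hq⟩ := exists_cross (hconn.2 m trivial x trivial) hmnp hx
    have hpVm : p ∈ Vm e := by rcases hmem p with h | h; · contradiction
                               · exact h
    have hge : g = e := cross_eq ends hcard Vp Vm hVp hVm hunion e g q p
      (by rw [hg, Sym2.eq_swap]) hq hpVm
    rw [hge, he, Sym2.eq_iff] at hg
    rcases hg with ⟨h1, _⟩ | ⟨_, h2⟩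
    · exact hp (h1 ▸ hx)
    · exact hp (h2 ▸ hy)
  have hnotmm : ¬ (x ∈ Vm e ∧ y ∈ Vm e) := by
    rintro ⟨hx, hy⟩
    obtain ⟨m, hm⟩ := (hVp e).1
    have hmnp : m ∉ Vm e := fun h => hnot m hm h
    obtain ⟨p, q, g, hg, hp, hq⟩ := exists_cross (hconn.2 m trivial x trivial) hmnp hx
    have hpVp : p ∈ Vp e := by rcases hmem p with h | h; · exact h
                               · contradiction
    have hge : g = e := cross_eq ends hcard Vp Vm hVp hVm hunion e g p q hg hpVp hq
    rw [hge, he, Sym2.eq_iff] at hg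
    rcases hg with ⟨h1, _⟩ | ⟨_, h2⟩
    · exact hp (h1 ▸ hx)
    · exact hp (h2 ▸ hy)
  rcases hmem x with hx | hx <;> rcases hmem y with hy | hy
  · exact absurd ⟨hx, hy⟩ hnotpp
  · exact Or.inl ⟨hx, hy⟩
  · exact Or.inr ⟨hx, hy⟩
  · exact absurd ⟨hx, hy⟩ hnotmm

/-- for `v ≠ w` there is a unique edge incident to `v` separating `v` from `w`. -/
theorem sep_edge (ends : E → Sym2 V)
    (hconn : GraphConnected ends)
    (hloopfree : ∀ e, ¬ (ends e).IsDiag)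
    (hcard : Fintype.card E + 1 = Fintype.card V) (Vp Vm : E → Set V)
    (hdisj : ∀ e, Vp e ∩ Vm e = ∅)
    (hunion : ∀ e, Vp e ∪ Vm e = Set.univ)
    (hVp : ∀ e, ConnectedOn (fun e' : {e' : E // e' ≠ e} => ends e'.1) (Vp e))
    (hVm : ∀ e, ConnectedOn (fun e' : {e' : E // e' ≠ e} => ends e'.1) (Vm e))
    (v w : V) (hvw : v ≠ w) :
    ∃ f, v ∈ ends f ∧ w ∉ side Vp Vm v f ∧
      ∀ e', v ∈ ends e' → w ∉ side Vp Vm v e' → e' = f := by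
  have hnot : ∀ (e : E) (z : V), z ∈ Vp e → z ∈ Vm e → False := by
    intro e z h1 h2
    have : z ∈ Vp e ∩ Vm e := ⟨h1, h2⟩
    rw [hdisj e] at this
    exact this
  have hopp : ∀ (e : E) (x y : V), ends e = s(x, y) → x ∈ side Vp Vm v e →
      y ∉ side Vp Vm v e := by
    intro e x y he hx hy
    have h := endpoints_opposite ends hconn hcard Vp Vm hdisj hunion hVp hVm e x y he
    by_cases hv : v ∈ Vp e
    · simp only [side, if_pos hv] at hx hy
      rcases h with ⟨h1, h2⟩ | ⟨h1, h2⟩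
      · exact hnot e y hy h2
      · exact hnot e x hx h1
    · simp only [side, if_neg hv] at hx hy
      rcases h with ⟨h1, h2⟩ | ⟨h1, h2⟩
      · exact hnot e x h1 hx
      · exact hnot e y h2 hy
  have hcross : ∀ (e g : E) (x y : V), ends g = s(x, y) → x ∈ side Vp Vm v e →
      y ∉ side Vp Vm v e → g = e := by
    intro e g x y hg hx hy
    rw [not_mem_side_iff hdisj hunion] at hy
    by_cases hv : v ∈ Vp e
    · simp only [side, if_pos hv] at hx
      rw [if_pos hv] at hy
      exact cross_eq ends hcard Vp Vm hVp hVm hunion e g x y hg hx hy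
    · simp only [side, if_neg hv] at hx
      rw [if_neg hv] at hy
      exact cross_eq ends hcard Vp Vm hVp hVm hunion e g y x
        (by rw [hg]; exact Sym2.eq_swap) hy hx
  have hex : ∃ n, Chain' ends n v w := exists_chain_of_reflTransGen (hconn.2 v trivial w trivial)
  set N := Nat.find hex with hN
  have hch : Chain' ends N v w := Nat.find_spec hex
  have hN0 : N ≠ 0 := by
    intro h0
    rw [h0] at hch
    exact hvw hch
  obtain ⟨k, hk⟩ := Nat.exists_eq_succ_of_ne_zero hN0
  rw [hk] at hch
  obtain ⟨u, f1, hf1, hc⟩ := hch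
  have hvside : ∀ e, v ∈ side Vp Vm v e := fun e => mem_side hunion v e
  have huside : u ∉ side Vp Vm v f1 := hopp f1 v u hf1 (hvside f1)
  -- (a) w is not on v's side of f1
  have hwf1 : w ∉ side Vp Vm v f1 := by
    intro hw
    obtain ⟨x, y, g, j, m, hj, hg, hx, hy, hm, hsum⟩ :=
      chain_cross (S := (side Vp Vm v f1)ᶜ) hc huside (by simpa using hw)
    have hxs : x ∉ side Vp Vm v f1 := hx
    have hys : y ∈ side Vp Vm v f1 := by simpa using hy
    have hgf1 : g = f1 := hcross f1 g y x (by rw [hg]; exact Sym2.eq_swap) hys hxs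
    rw [hgf1, hf1, Sym2.eq_iff] at hg
    -- hg : (v = x ∧ u = y) ∨ (v = y ∧ u = x)
    have hyv : y = v := by
      rcases hg with ⟨h1, h2⟩ | ⟨h1, h2⟩
      · exact absurd (h2 ▸ hys) huside
      · exact h1.symm
    have : N ≤ m := hN ▸ Nat.find_le (hyv ▸ hm)
    omega
  refine ⟨f1, by rw [hf1]; exact Sym2.mem_mk_left v u, hwf1, ?_⟩
  -- (b) uniqueness
  intro e' hve' hwe'
  by_contra hne
  obtain ⟨z, hz⟩ := Sym2.mem_iff_exists.mp hve'
  have huze' : u ∈ side Vp Vm v e' := by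
    by_contra hu
    exact hne (hcross e' f1 v u hf1 (hvside e') hu).symm
  obtain ⟨x, y, g, j, m, hj, hg, hx, hy, hm, hsum⟩ :=
    chain_cross (S := side Vp Vm v e') hc huze' hwe'
  have hge' : g = e' := hcross e' g x y hg hx hy
  rw [hge', hz, Sym2.eq_iff] at hg
  -- hg : (v = x ∧ z = y) ∨ (v = y ∧ z = x)
  have hyz : y = z := by
    rcases hg with ⟨h1, h2⟩ | ⟨h1, h2⟩
    · exact h2.symm
    · exact absurd (h1 ▸ hvside e') hy
  have hchain : Chain' ends (m+1) v w := ⟨z, e', hz, hyz ▸ hm⟩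
  have : N ≤ m + 1 := hN ▸ Nat.find_le hchain
  omega

theorem key_injective (ends : E → Sym2 V)
    (hconn : GraphConnected ends)
    (hloopfree : ∀ e, ¬ (ends e).IsDiag)
    (hcard : Fintype.card E + 1 = Fintype.card V) (Vp Vm : E → Set V)
    (hdisj : ∀ e, Vp e ∩ Vm e = ∅)
    (hunion : ∀ e, Vp e ∪ Vm e = Set.univ)
    (hVp : ∀ e, ConnectedOn (fun e' : {e' : E // e' ≠ e} => ends e'.1) (Vp e))
    (hVm : ∀ e, ConnectedOn (fun e' : {e' : E // e' ≠ e} => ends e'.1) (Vm e))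
    (φ : V → ℝ)
    (hp : ∀ e, ∑ v ∈ (Vp e).toFinset, φ v = 0)
    (hm : ∀ e, ∑ v ∈ (Vm e).toFinset, φ v = 0)
    (hs : ∑ v, φ v = 0) : φ = 0 := by
  funext v
  show φ v = 0
  by_cases hone : ∀ w : V, w = v
  · have huniv : (Finset.univ : Finset V) = {v} := by
      ext w; simp [hone w]
    rw [huniv, Finset.sum_singleton] at hs
    exact hs
  push_neg at hone
  obtain ⟨w, hw⟩ := hone
  set Iv : Finset E := Finset.univ.filter (fun e => v ∈ ends e) with hIv
  have hσ : ∀ e, ∑ u ∈ (side Vp Vm v e).toFinset, φ u = 0 := by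
    intro e
    rw [side]
    split
    · exact hp e
    · exact hm e
  have hcount1 : ∀ u, u ≠ v →
      (Iv.filter (fun e => u ∉ side Vp Vm v e)).card = 1 := by
    intro u hu
    obtain ⟨f, hfmem, hfsep, hfuniq⟩ :=
      sep_edge ends hconn hloopfree hcard Vp Vm hdisj hunion hVp hVm v u (Ne.symm hu)
    rw [Finset.card_eq_one]
    refine ⟨f, ?_⟩
    ext g
    simp only [Finset.mem_filter, Finset.mem_singleton, hIv, Finset.mem_univ, true_and]
    constructor
    · rintro ⟨h1, h2⟩
      exact hfuniq g h1 h2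
    · rintro rfl
      exact ⟨hfmem, hfsep⟩
  have hcount0 : (Iv.filter (fun e => v ∉ side Vp Vm v e)).card = 0 := by
    rw [Finset.card_eq_zero, Finset.filter_eq_empty_iff]
    intro e _
    simp [mem_side hunion v e]
  have h0 : ∑ e ∈ Iv, ∑ u ∈ (side Vp Vm v e).toFinset, φ u = 0 := by
    rw [Finset.sum_congr rfl (fun e _ => hσ e), Finset.sum_const, smul_zero]
  have hstep1 : ∀ e, ∑ u ∈ (side Vp Vm v e).toFinset, φ u
      = ∑ u : V, if u ∈ side Vp Vm v e then φ u else 0 := by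
    intro e
    rw [show (side Vp Vm v e).toFinset
        = Finset.univ.filter (fun u => u ∈ side Vp Vm v e) from by ext u; simp]
    rw [Finset.sum_filter]
  have hsplit : ∀ u, ∑ e ∈ Iv, (if u ∈ side Vp Vm v e then φ u else 0)
      = (Iv.card : ℝ) * φ u
        - ((Iv.filter (fun e => u ∉ side Vp Vm v e)).card : ℝ) * φ u := by
    intro u
    have hterm : ∀ e, (if u ∈ side Vp Vm v e then φ u else 0)
        = φ u - (if u ∉ side Vp Vm v e then φ u else 0) := by
      intro e
      by_cases h : u ∈ side Vp Vm v e <;> simp [h]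
    rw [Finset.sum_congr rfl (fun e _ => hterm e), Finset.sum_sub_distrib,
      Finset.sum_const, ← Finset.sum_filter, Finset.sum_const]
    simp [nsmul_eq_mul]
  have hcnt : ∀ u, ((Iv.filter (fun e => u ∉ side Vp Vm v e)).card : ℝ)
      = if u = v then 0 else 1 := by
    intro u
    by_cases h : u = v
    · subst h; rw [hcount0]; simp
    · rw [hcount1 u h]; simp [h]
  have hmain : (0:ℝ) = ∑ u : V, ((Iv.card : ℝ) * φ u - (if u = v then 0 else 1) * φ u) := by
    calc (0:ℝ) = ∑ e ∈ Iv, ∑ u ∈ (side Vp Vm v e).toFinset, φ u := h0.symm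
    _ = ∑ e ∈ Iv, ∑ u : V, (if u ∈ side Vp Vm v e then φ u else 0) :=
        Finset.sum_congr rfl (fun e _ => hstep1 e)
    _ = ∑ u : V, ∑ e ∈ Iv, (if u ∈ side Vp Vm v e then φ u else 0) := Finset.sum_comm
    _ = ∑ u : V, ((Iv.card : ℝ) * φ u - (if u = v then 0 else 1) * φ u) := by
        refine Finset.sum_congr rfl (fun u _ => ?_)
        rw [hsplit u, hcnt u]
  have hite : ∑ u : V, (if u = v then (0:ℝ) else 1) * φ u = ∑ u : V, φ u - φ v := by
    have : ∀ u : V, (if u = v then (0:ℝ) else 1) * φ u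
        = φ u - (if u = v then φ u else 0) := by
      intro u
      by_cases h : u = v <;> simp [h]
    rw [Finset.sum_congr rfl (fun u _ => this u), Finset.sum_sub_distrib,
      Finset.sum_ite_eq' Finset.univ v φ]
    simp
  rw [Finset.sum_sub_distrib, ← Finset.mul_sum, hite, hs] at hmain
  simp at hmain
  linarith

/-- the relevant linear map as a bundled `LinearMap`. -/
noncomputable def Lmap (ends : E → Sym2 V) (Vp Vm : E → Set V) :
    (V → ℝ) →ₗ[ℝ] (E → ℝ) × ℝ where
  toFun φ := (fun e => ∑ v ∈ (Vp e).toFinset, φ v - ∑ v ∈ (Vm e).toFinset, φ v, ∑ v, φ v)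
  map_add' φ ψ := by
    refine Prod.ext ?_ ?_
    · funext e
      simp only [Prod.fst_add, Pi.add_apply, Finset.sum_add_distrib]
      ring
    · simp [Finset.sum_add_distrib]
  map_smul' c φ := by
    refine Prod.ext ?_ ?_
    · funext e
      simp only [Prod.smul_fst, Pi.smul_apply, smul_eq_mul, RingHom.id_apply,
        ← Finset.mul_sum]
      ring
    · simp [Finset.mul_sum]

theorem Lmap_apply (ends : E → Sym2 V) (Vp Vm : E → Set V) (φ : V → ℝ) :
    Lmap ends Vp Vm φ
      = (fun e => ∑ v ∈ (Vp e).toFinset, φ v - ∑ v ∈ (Vm e).toFinset, φ v, ∑ v, φ v) := rfl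

end Tree

/-- Let `T` be a finite tree (a connected loop-free multigraph with
`#E + 1 = #V`), and for each edge `e` let `Vp e` and `Vm e` be the vertex sets of the
two connected components of `T` with `e` removed (a labelling fixed once for each
edge; these are characterized as a partition of the vertex set into two subsets, each
connected in `T − e`).  Then the linear map `ℝ^V → ℝ^E × ℝ` sending `φ` to
`((Σ_{v ∈ Vp e} φ v − Σ_{v ∈ Vm e} φ v)_e, Σ_v φ v)` is a linear isomorphism;
in particular, for any prescribed `(a, s)` there is a unique `φ` with the prescribed
differences and total sum. -/
theorem statement0 (V E : Type) [Fintype V] [Fintype E] (ends : E → Sym2 V)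
    (hconn : GraphConnected ends)
    (hloopfree : ∀ e, ¬ (ends e).IsDiag)
    (hcard : Fintype.card E + 1 = Fintype.card V)
    (Vp Vm : E → Set V)
    (hdisj : ∀ e, Vp e ∩ Vm e = ∅)
    (hunion : ∀ e, Vp e ∪ Vm e = Set.univ)
    (hVp : ∀ e, ConnectedOn (fun e' : {e' : E // e' ≠ e} => ends e'.1) (Vp e))
    (hVm : ∀ e, ConnectedOn (fun e' : {e' : E // e' ≠ e} => ends e'.1) (Vm e)) :
    Function.Bijective
      (fun φ : V → ℝ =>
        ((fun e => (∑ᶠ v ∈ Vp e, φ v) - ∑ᶠ v ∈ Vm e, φ v, ∑ v, φ v) :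
          (E → ℝ) × ℝ)) ∧
    ∀ (a : E → ℝ) (s : ℝ), ∃! φ : V → ℝ,
      (∀ e, (∑ᶠ v ∈ Vp e, φ v) - (∑ᶠ v ∈ Vm e, φ v) = a e) ∧ (∑ v, φ v) = s := by

  have hfin : ∀ (S : Set V) (φ : V → ℝ), (∑ᶠ v ∈ S, φ v) = ∑ v ∈ S.toFinset, φ v := by
    intro S φ
    rw [← finsum_mem_coe_finset, Set.coe_toFinset]
  have hFL : (fun φ : V → ℝ =>
      ((fun e => (∑ᶠ v ∈ Vp e, φ v) - ∑ᶠ v ∈ Vm e, φ v, ∑ v, φ v) : (E → ℝ) × ℝ))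
      = ⇑(Lmap ends Vp Vm) := by
    funext φ
    rw [Lmap_apply]
    refine Prod.ext ?_ rfl
    funext e
    simp [hfin]
  -- kernel is trivial
  have hinj : Function.Injective (Lmap ends Vp Vm) := by
    rw [← LinearMap.ker_eq_bot, LinearMap.ker_eq_bot']
    intro φ hφ
    have h1 : ∀ e, ∑ v ∈ (Vp e).toFinset, φ v - ∑ v ∈ (Vm e).toFinset, φ v = 0 := by
      intro e
      exact congrFun (congrArg Prod.fst hφ) e
    have h2 : ∑ v, φ v = 0 := congrArg Prod.snd hφ
    have hsum : ∀ e, ∑ v ∈ (Vp e).toFinset, φ v + ∑ v ∈ (Vm e).toFinset, φ v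
        = ∑ v, φ v := by
      intro e
      rw [← Finset.sum_union]
      · congr 1
        ext x
        simp only [Finset.mem_union, Set.mem_toFinset, Finset.mem_univ, iff_true]
        rw [← Set.mem_union, hunion e]
        trivial
      · rw [Finset.disjoint_left]
        intro x hx hx'
        rw [Set.mem_toFinset] at hx hx'
        have : x ∈ Vp e ∩ Vm e := ⟨hx, hx'⟩
        rw [hdisj e] at this
        exact this
    have hp : ∀ e, ∑ v ∈ (Vp e).toFinset, φ v = 0 := by
      intro e
      have := hsum e
      have := h1 e
      linarith
    have hm : ∀ e, ∑ v ∈ (Vm e).toFinset, φ v = 0 := by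
      intro e
      have := hsum e
      have := h1 e
      linarith
    exact key_injective ends hconn hloopfree hcard Vp Vm hdisj hunion hVp hVm φ hp hm h2
  have hdim : Module.finrank ℝ (V → ℝ) = Module.finrank ℝ ((E → ℝ) × ℝ) := by
    rw [Module.finrank_prod, Module.finrank_pi, Module.finrank_pi, Module.finrank_self]
    omega
  have hsurj : Function.Surjective (Lmap ends Vp Vm) := by
    intro y
    obtain ⟨x, hx⟩ := ((Lmap ends Vp Vm).linearEquivOfInjective hinj hdim).surjective y
    exact ⟨x, by rw [← (Lmap ends Vp Vm).linearEquivOfInjective_apply hinj hdim]; exact hx⟩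
  have hbij : Function.Bijective (Lmap ends Vp Vm) := ⟨hinj, hsurj⟩
  constructor
  · rw [hFL]; exact hbij
  · intro a s
    obtain ⟨φ, hφ⟩ := hsurj (a, s)
    have hchar : ∀ ψ : V → ℝ,
        ((∀ e, (∑ᶠ v ∈ Vp e, ψ v) - (∑ᶠ v ∈ Vm e, ψ v) = a e) ∧ (∑ v, ψ v) = s)
          ↔ Lmap ends Vp Vm ψ = (a, s) := by
      intro ψ
      rw [Lmap_apply]
      constructor
      · rintro ⟨hea, hes⟩
        refine Prod.ext ?_ hes
        funext e
        have := hea e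
        rw [hfin, hfin] at this
        exact this
      · intro h
        have h1 := congrArg Prod.fst h
        have h2 := congrArg Prod.snd h
        refine ⟨fun e => ?_, h2⟩
        rw [hfin, hfin]
        exact congrFun h1 e
    refine ⟨φ, (hchar φ).mpr hφ, ?_⟩
    intro ψ hψ
    exact hinj (((hchar ψ).mp hψ).trans hφ.symm)

end ThetaPaper
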